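/- Let p, q ∈ [0, 1/4] and let n ≥ 16 be a natural number. Set μ := np and λ := nq. Suppose X, X' ~ Poisson(μ) and Y, Y' ~ Poisson(λ) are mutually independent. Then Δ := E[|X−Y| + |X'−Y'| − |X−X'| − |Y−Y'|] ≥ min( (1/20)·(μ−λ)², (1/5)·|μ−λ|, (1/7)·(μ−λ)²/√(μ+λ) ). -/

import Mathlib

set_option maxHeartbeats 1000000

open MeasureTheory ProbabilityTheory

/-- The Poisson distribution with mean `m ≥ 0`, as a measure on `ℝ` supported on `ℕ`. -/
noncomputable def poissonRealMeasure (m : ℝ) : Measure ℝ :=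
  Measure.sum fun k : ℕ =>
    ENNReal.ofReal (Real.exp (-m) * m ^ k / (Nat.factorial k : ℝ)) • Measure.dirac (k : ℝ)

namespace PoiGap

noncomputable def pp (t : ℝ) (k : ℕ) : ℝ := Real.exp (-t) * t ^ k / (Nat.factorial k : ℝ)
noncomputable def FF (t : ℝ) (m : ℕ) : ℝ := ∑ k ∈ Finset.range (m+1), pp t k

lemma pp_nonneg {t : ℝ} (ht : 0 ≤ t) (k : ℕ) : 0 ≤ pp t k := by
  unfold pp; positivity

lemma hasSum_pp {t : ℝ} (ht : 0 ≤ t) : HasSum (pp t) 1 := by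
  have := ProbabilityTheory.poissonPMFRealSum ⟨t, ht⟩
  exact this

lemma pp_succ (t : ℝ) (k : ℕ) : ((k:ℝ)+1) * pp t (k+1) = t * pp t k := by
  have hfac : ((Nat.factorial (k+1) : ℝ)) = ((k:ℝ)+1) * Nat.factorial k := by
    push_cast [Nat.factorial_succ]; ring
  have hfk : (Nat.factorial k : ℝ) ≠ 0 := Nat.cast_ne_zero.mpr (Nat.factorial_ne_zero k)
  have hk1 : ((k:ℝ)+1) ≠ 0 := by positivity
  unfold pp
  rw [hfac, pow_succ]
  field_simp

lemma hasSum_mul_pp {t : ℝ} (ht : 0 ≤ t) : HasSum (fun k : ℕ => (k : ℝ) * pp t k) t := by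
  have h0 : HasSum (fun k : ℕ => t * pp t k) t := by
    simpa using (hasSum_pp ht).mul_left t
  rw [← hasSum_nat_add_iff' 1]
  have hg : (fun n : ℕ => ((n+1 : ℕ) : ℝ) * pp t (n+1)) = fun n : ℕ => t * pp t n := by
    funext n; push_cast; exact pp_succ t n
  rw [hg]
  simpa using h0

lemma hasSum_sq_pp {t : ℝ} (ht : 0 ≤ t) :
    HasSum (fun k : ℕ => (k : ℝ)^2 * pp t k) (t^2 + t) := by
  have h1 : HasSum (fun k : ℕ => (k : ℝ) * ((k : ℝ) - 1) * pp t k) (t^2) := by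
    have h0 : HasSum (fun k : ℕ => t^2 * pp t k) (t^2) := by
      simpa using (hasSum_pp ht).mul_left (t^2)
    rw [← hasSum_nat_add_iff' 2]
    have hg : (fun n : ℕ => ((n+2 : ℕ) : ℝ) * (((n+2 : ℕ) : ℝ) - 1) * pp t (n+2))
        = fun n : ℕ => t^2 * pp t n := by
      funext n
      have e1 : ((n:ℝ)+2) * pp t (n+2) = t * pp t (n+1) := by
        have := pp_succ t (n+1); push_cast at this ⊢; linarith [this]
      have e2 : ((n:ℝ)+1) * pp t (n+1) = t * pp t n := pp_succ t n
      push_cast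
      have : ((n:ℝ) + 2) * ((n:ℝ) + 2 - 1) * pp t (n+2)
          = ((n:ℝ)+1) * (((n:ℝ)+2) * pp t (n+2)) := by ring
      rw [this, e1]
      rw [show ((n:ℝ)+1) * (t * pp t (n+1)) = t * (((n:ℝ)+1) * pp t (n+1)) by ring, e2]
      ring
    rw [hg]
    have hz : ∑ i ∈ Finset.range 2, (i:ℝ) * ((i:ℝ) - 1) * pp t i = 0 := by
      simp [Finset.sum_range_succ]
    rw [hz]
    simpa using h0
  have := (h1.add (hasSum_mul_pp ht))
  have heq : (fun k : ℕ => (k : ℝ) * ((k : ℝ) - 1) * pp t k + (k:ℝ) * pp t k)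
      = fun k : ℕ => (k : ℝ)^2 * pp t k := by funext k; ring
  rwa [heq] at this

lemma hasSum_central_pp {t : ℝ} (ht : 0 ≤ t) :
    HasSum (fun k : ℕ => ((k : ℝ) - t)^2 * pp t k) t := by
  have h2 := hasSum_sq_pp ht
  have h1 := (hasSum_mul_pp ht).mul_left (2*t)
  have h0 := (hasSum_pp ht).mul_left (t^2)
  have := (h2.sub h1).add h0
  have heq : (fun k : ℕ => (k:ℝ)^2 * pp t k - 2*t*((k:ℝ) * pp t k) + t^2 * pp t k)
      = fun k : ℕ => ((k : ℝ) - t)^2 * pp t k := by funext k; ring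
  rw [heq] at this
  have e : t^2 + t - 2*t*t + t^2*1 = t := by ring
  rwa [e] at this


lemma FF_nonneg {t : ℝ} (ht : 0 ≤ t) (m : ℕ) : 0 ≤ FF t m :=
  Finset.sum_nonneg fun k _ => pp_nonneg ht k

lemma FF_le_one {t : ℝ} (ht : 0 ≤ t) (m : ℕ) : FF t m ≤ 1 :=
  sum_le_hasSum _ (fun k _ => pp_nonneg ht k) (hasSum_pp ht)

lemma FF_tail {t : ℝ} (ht : 0 ≤ t) (m : ℕ) :
    1 - FF t m ≤ (t^2 + t) / ((m:ℝ)+1)^2 := by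
  have hsum : Summable (pp t) := (hasSum_pp ht).summable
  have htail : 1 - FF t m = ∑' k : ℕ, pp t (k + (m+1)) := by
    have := (hsum.sum_add_tsum_nat_add (m+1))
    rw [(hasSum_pp ht).tsum_eq] at this
    unfold FF
    linarith [this]
  rw [htail]
  have hsq : Summable (fun k : ℕ => (k : ℝ)^2 * pp t k) := (hasSum_sq_pp ht).summable
  have hsq' : Summable (fun k : ℕ => ((k + (m+1) : ℕ) : ℝ)^2 * pp t (k + (m+1))) := by
    exact_mod_cast (summable_nat_add_iff (f := fun k : ℕ => (k : ℝ)^2 * pp t k) (m+1)).mpr hsq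
  have h1 : ∑' k : ℕ, pp t (k + (m+1))
      ≤ ∑' k : ℕ, ((k + (m+1) : ℕ) : ℝ)^2 * pp t (k + (m+1)) / ((m:ℝ)+1)^2 := by
    apply Summable.tsum_le_tsum _ ((summable_nat_add_iff (f := pp t) (m+1)).mpr hsum) (hsq'.div_const _)
    intro k
    rw [le_div_iff₀ (by positivity)]
    have h2 : ((m:ℝ)+1)^2 ≤ ((k + (m+1) : ℕ) : ℝ)^2 := by
      apply pow_le_pow_left₀ (by positivity)
      push_cast; linarith
    nlinarith [pp_nonneg ht (k + (m+1))]
  have h3 : ∑' k : ℕ, ((k + (m+1) : ℕ) : ℝ)^2 * pp t (k + (m+1)) ≤ t^2 + t := by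
    have := hsq.sum_add_tsum_nat_add (m+1)
    rw [(hasSum_sq_pp ht).tsum_eq] at this
    have hnn : 0 ≤ ∑ i ∈ Finset.range (m+1), (i : ℝ)^2 * pp t i :=
      Finset.sum_nonneg fun k _ => mul_nonneg (sq_nonneg _) (pp_nonneg ht k)
    push_cast
    push_cast at this
    linarith
  calc ∑' k : ℕ, pp t (k + (m+1))
      ≤ ∑' k : ℕ, ((k + (m+1) : ℕ) : ℝ)^2 * pp t (k + (m+1)) / ((m:ℝ)+1)^2 := h1
    _ = (∑' k : ℕ, ((k + (m+1) : ℕ) : ℝ)^2 * pp t (k + (m+1))) / ((m:ℝ)+1)^2 := by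
        rw [tsum_div_const]
    _ ≤ (t^2 + t) / ((m:ℝ)+1)^2 := by
        apply div_le_div_of_nonneg_right h3 (by positivity) |>.trans_eq rfl

lemma hasDerivAt_FF (m : ℕ) (t : ℝ) : HasDerivAt (fun s => FF s m) (-(pp t m)) t := by
  induction m with
  | zero =>
      have h : HasDerivAt (fun s : ℝ => Real.exp (-s)) (-(Real.exp (-t))) t := by
        simpa [Function.comp_def] using (Real.hasDerivAt_exp (-t)).comp t (hasDerivAt_neg t)
      have : (fun s : ℝ => FF s 0) = fun s => Real.exp (-s) := by
        funext s; simp [FF, pp]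
      rw [this]
      simpa [pp] using h
  | succ m ih =>
      have hexp : HasDerivAt (fun s : ℝ => Real.exp (-s)) (-(Real.exp (-t))) t := by
        simpa [Function.comp_def] using (Real.hasDerivAt_exp (-t)).comp t (hasDerivAt_neg t)
      have hpow : HasDerivAt (fun s : ℝ => s ^ (m+1)) (((m:ℝ)+1) * t ^ m) t := by
        simpa using hasDerivAt_pow (m+1) t
      have hterm : HasDerivAt (fun s : ℝ => pp s (m+1))
          ((-(Real.exp (-t)) * t^(m+1) + Real.exp (-t) * (((m:ℝ)+1) * t ^ m)) / (Nat.factorial (m+1) : ℝ)) t := by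
        unfold pp
        exact (hexp.mul hpow).div_const _
      have hsum : (fun s => FF s (m+1)) = fun s => FF s m + pp s (m+1) := by
        funext s; simp [FF, Finset.sum_range_succ]
      rw [hsum]
      have := ih.add hterm
      refine this.congr_deriv ?_
      have hfac : ((Nat.factorial (m+1) : ℝ)) = ((m:ℝ)+1) * Nat.factorial m := by
        push_cast [Nat.factorial_succ]; ring
      have hfk : (Nat.factorial m : ℝ) ≠ 0 := Nat.cast_ne_zero.mpr (Nat.factorial_ne_zero m)
      have hm1 : ((m:ℝ)+1) ≠ 0 := by positivity
      unfold pp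
      rw [hfac, pow_succ]
      field_simp
      ring

lemma dd_eq_integral {l u : ℝ} (m : ℕ) :
    FF l m - FF u m = ∫ t in l..u, pp t m := by
  have hcont : Continuous (fun t : ℝ => pp t m) := by
    unfold pp
    fun_prop
  have := intervalIntegral.integral_eq_sub_of_hasDerivAt
    (f := fun s => -(FF s m)) (f' := fun t => pp t m) (a := l) (b := u)
    (fun t _ => by simpa [Pi.neg_def] using (hasDerivAt_FF m t).neg)
    (hcont.intervalIntegrable l u)
  rw [this]; ring


lemma window {l u : ℝ} (hl : 0 ≤ l) (hlu : l ≤ u) :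
    ∃ S : Finset ℕ, ((S.card : ℝ) ≤ (u - l) + (5/2)*(Real.sqrt u + Real.sqrt l) + 1) ∧
      ∀ t ∈ Set.Icc l u, (21/25 : ℝ) ≤ ∑ m ∈ S, pp t m := by
  have hu : 0 ≤ u := hl.trans hlu
  set M : ℕ := ⌊u + (5/2)*Real.sqrt u⌋₊ with hM
  set J : ℕ := if (25/16 : ℝ) ≤ l then ⌈l - (5/2)*Real.sqrt l⌉₊ else 0 with hJ
  have hMle : (M : ℝ) ≤ u + (5/2)*Real.sqrt u := Nat.floor_le (by positivity)
  have hJge : l - (5/2)*Real.sqrt l ≤ (J : ℝ) := by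
    rw [hJ]
    split_ifs with h
    · exact Nat.le_ceil _
    · push_neg at h
      have hsl : Real.sqrt l < 5/4 := by
        have : Real.sqrt l < Real.sqrt (25/16) := by
          apply Real.sqrt_lt_sqrt hl h
        simpa [Real.sqrt_eq_iff_eq_sq, show Real.sqrt (25/16) = 5/4 by
          rw [show (25/16 : ℝ) = (5/4)^2 by norm_num, Real.sqrt_sq (by norm_num)]] using this
      have h2 : 0 ≤ Real.sqrt l := Real.sqrt_nonneg l
      have h3 : l = Real.sqrt l * Real.sqrt l := (Real.mul_self_sqrt hl).symm
      simp only [Nat.cast_zero]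
      nlinarith
  refine ⟨Finset.Icc J M, ?_, ?_⟩
  · rcases le_or_gt J (M+1) with hJM | hJM
    · have : (Finset.Icc J M).card = M + 1 - J := Nat.card_Icc J M
      rw [this]
      have : ((M + 1 - J : ℕ) : ℝ) = (M:ℝ) + 1 - J := by
        rw [Nat.cast_sub hJM]; push_cast; ring
      rw [this]
      have := Real.sqrt_nonneg l
      have := Real.sqrt_nonneg u
      linarith
    · have : Finset.Icc J M = ∅ := by
        apply Finset.Icc_eq_empty
        omega
      rw [this]
      simp only [Finset.card_empty, Nat.cast_zero]
      have := Real.sqrt_nonneg l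
      have := Real.sqrt_nonneg u
      nlinarith [Real.sq_sqrt hl, Real.sq_sqrt hu, Real.sqrt_nonneg l, Real.sqrt_nonneg u]
  · intro t ⟨htl, htu⟩
    have ht : 0 ≤ t := hl.trans htl
    have hsum : Summable (pp t) := (hasSum_pp ht).summable
    -- escape bound
    have hesc : ∀ m : ℕ, m ∉ Finset.Icc J M → t ≠ 0 → (25/4)*t ≤ ((m:ℝ) - t)^2 := by
      intro m hm ht0
      have htpos : 0 < t := lt_of_le_of_ne ht (Ne.symm ht0)
      rw [Finset.mem_Icc, not_and_or] at hm
      have hst : Real.sqrt t * Real.sqrt t = t := Real.mul_self_sqrt ht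
      have hstn : 0 ≤ Real.sqrt t := Real.sqrt_nonneg t
      rcases hm with hm | hm
      · -- m < J, so case A holds
        push_neg at hm
        have hJpos : J ≠ 0 := by omega
        have hcase : (25/16 : ℝ) ≤ l := by
          by_contra h
          rw [hJ] at hJpos; simp [h] at hJpos
        have hJdef : J = ⌈l - (5/2)*Real.sqrt l⌉₊ := by rw [hJ, if_pos hcase]
        have hmlt : (m : ℝ) < l - (5/2)*Real.sqrt l := by
          rw [hJdef] at hm
          exact (Nat.lt_ceil).mp hm
        have hsl : (5/4 : ℝ) ≤ Real.sqrt l := by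
          rw [show (5/4 : ℝ) = Real.sqrt (25/16) by
            rw [show (25/16 : ℝ) = (5/4)^2 by norm_num, Real.sqrt_sq (by norm_num)]]
          exact Real.sqrt_le_sqrt hcase
        have hmono : l - (5/2)*Real.sqrt l ≤ t - (5/2)*Real.sqrt t := by
          have h1 : Real.sqrt l ≤ Real.sqrt t := Real.sqrt_le_sqrt htl
          have hsll : Real.sqrt l * Real.sqrt l = l := Real.mul_self_sqrt hl
          nlinarith
        have : (5/2)*Real.sqrt t ≤ t - m := by nlinarith
        nlinarith
      · -- m > M
        push_neg at hm
        have hmgt : u + (5/2)*Real.sqrt u < (m : ℝ) := by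
          have := (Nat.floor_lt (by positivity : (0:ℝ) ≤ u + (5/2)*Real.sqrt u)).mp hm
          exact this
        have hmono : t + (5/2)*Real.sqrt t ≤ u + (5/2)*Real.sqrt u := by
          have h1 : Real.sqrt t ≤ Real.sqrt u := Real.sqrt_le_sqrt htu
          linarith
        have : (5/2)*Real.sqrt t ≤ (m:ℝ) - t := by nlinarith
        nlinarith
    -- tail sum bound
    set S := Finset.Icc J M with hS
    have hfS : HasSum (fun m : ℕ => if m ∈ S then pp t m else 0) (∑ m ∈ S, pp t m) := by
      have := hasSum_sum_of_ne_finset_zero (L := SummationFilter.unconditional ℕ) (s := S)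
        (f := fun m : ℕ => if m ∈ S then pp t m else 0) (by intro b hb; simp [hb])
      simpa [Finset.sum_ite_of_true (fun m hm => hm)] using this
    have hh : HasSum (fun m : ℕ => if m ∈ S then 0 else pp t m) (1 - ∑ m ∈ S, pp t m) := by
      have := (hasSum_pp ht).sub hfS
      have hfun : (fun m : ℕ => if m ∈ S then 0 else pp t m)
          = fun b => pp t b - if b ∈ S then pp t b else 0 := by
        funext m
        by_cases hm : m ∈ S <;> simp [hm]
      rw [hfun]; exact this
    have htail : 1 - ∑ m ∈ S, pp t m ≤ 4/25 := by
      rcases eq_or_lt_of_le ht with ht0 | htpos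
      · -- t = 0
        have hz : ∀ m : ℕ, (if m ∈ S then 0 else pp t m) = 0 := by
          intro m
          by_cases hm : m ∈ S
          · simp [hm]
          · have hm0 : m ≠ 0 := by
              intro h
              apply hm
              rw [h, hS, Finset.mem_Icc]
              refine ⟨?_, Nat.zero_le M⟩
              have hl0 : l = 0 := le_antisymm (htl.trans ht0.symm.le) hl
              rw [hJ]
              have : ¬ ((25/16 : ℝ) ≤ l) := by rw [hl0]; norm_num
              simp [this]
            simp only [if_neg hm, pp, ← ht0]
            simp [zero_pow hm0]
        have h0 : HasSum (fun m : ℕ => if m ∈ S then 0 else pp t m) 0 := by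
          have : (fun m : ℕ => if m ∈ S then 0 else pp t m) = fun _ => (0:ℝ) := funext hz
          rw [this]; exact hasSum_zero
        have := hh.unique h0
        rw [this]; norm_num
      · -- t > 0
        have hg : Summable (fun k : ℕ => ((k : ℝ) - t)^2 * pp t k) :=
          (hasSum_central_pp ht).summable
        have h4 : (0:ℝ) < 4/(25*t) := by positivity
        have hgsum : Summable (fun m : ℕ => (4/(25*t)) * (((m:ℝ) - t)^2 * pp t m)) :=
          hg.mul_left _
        have hle : ∀ m : ℕ, (if m ∈ S then 0 else pp t m)
            ≤ (4/(25*t)) * (((m:ℝ) - t)^2 * pp t m) := by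
          intro m
          by_cases hm : m ∈ S
          · simp only [if_pos hm]
            exact mul_nonneg (le_of_lt h4) (mul_nonneg (sq_nonneg _) (pp_nonneg ht m))
          · simp only [if_neg hm]
            have hq := hesc m hm (ne_of_gt htpos)
            have hpn := pp_nonneg ht m
            have h5 : (25/4*t) * pp t m ≤ ((m:ℝ)-t)^2 * pp t m :=
              mul_le_mul_of_nonneg_right hq hpn
            have h6 := mul_le_mul_of_nonneg_left h5 (le_of_lt h4)
            calc pp t m = (4/(25*t)) * ((25/4*t) * pp t m) := by field_simp
              _ ≤ (4/(25*t)) * (((m:ℝ)-t)^2 * pp t m) := h6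
        have hfull : ∑' m : ℕ, (4/(25*t)) * (((m:ℝ) - t)^2 * pp t m) = 4/25 := by
          rw [tsum_mul_left, (hasSum_central_pp ht).tsum_eq]
          field_simp
        have := Summable.tsum_le_tsum hle hh.summable hgsum
        rw [hh.tsum_eq, hfull] at this
        exact this
    linarith

lemma pp_cont (m : ℕ) : Continuous (fun t : ℝ => pp t m) := by
  unfold pp; fun_prop

lemma dd_nonneg {l u : ℝ} (hl : 0 ≤ l) (hlu : l ≤ u) (m : ℕ) :
    0 ≤ FF l m - FF u m := by
  rw [dd_eq_integral]
  apply intervalIntegral.integral_nonneg hlu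
  intro t ⟨h1, _⟩
  exact pp_nonneg (hl.trans h1) m

lemma summable_inv_sq : Summable (fun m : ℕ => 1/((m:ℝ)+1)^2) := by
  have h2 : Summable (fun n : ℕ => 1/((n:ℝ))^2) :=
    Real.summable_one_div_nat_pow.mpr (by norm_num)
  have := (summable_nat_add_iff (f := fun n : ℕ => 1/((n:ℝ))^2) 1).mpr h2
  simpa [Nat.cast_add] using this

lemma summable_dd {l u : ℝ} (hl : 0 ≤ l) (hlu : l ≤ u) :
    Summable (fun m : ℕ => FF l m - FF u m) := by
  have hu : 0 ≤ u := hl.trans hlu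
  have base : Summable (fun m : ℕ => (u^2+u) * (1/((m:ℝ)+1)^2)) := by
    apply Summable.mul_left
    have h2 : Summable (fun n : ℕ => 1/((n:ℝ))^2) :=
      Real.summable_one_div_nat_pow.mpr (by norm_num)
    have := (summable_nat_add_iff (f := fun n : ℕ => 1/((n:ℝ))^2) 1).mpr h2
    simpa [Nat.cast_add] using this
  apply Summable.of_nonneg_of_le (fun m => dd_nonneg hl hlu m) _ base
  intro m
  have h1 : FF l m ≤ 1 := FF_le_one hl m
  have h2 := FF_tail hu m
  have : FF l m - FF u m ≤ 1 - FF u m := by linarith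
  calc FF l m - FF u m ≤ (u^2+u)/((m:ℝ)+1)^2 := by linarith
    _ = (u^2+u) * (1/((m:ℝ)+1)^2) := by ring

lemma summable_dd_sq {l u : ℝ} (hl : 0 ≤ l) (hlu : l ≤ u) :
    Summable (fun m : ℕ => (FF l m - FF u m)^2) := by
  apply Summable.of_nonneg_of_le (fun m => sq_nonneg _) _ (summable_dd hl hlu)
  intro m
  have h0 := dd_nonneg hl hlu m
  have h1 : FF l m - FF u m ≤ 1 := by
    have := FF_le_one hl m
    have := FF_nonneg (hl.trans hlu) m
    linarith
  nlinarith

lemma core {l u : ℝ} (hl : 0 ≤ l) (hlu : l ≤ u) :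
    min ((1/20) * (u - l)^2) (min ((1/5) * (u-l)) ((1/7) * (u-l)^2 / Real.sqrt (u+l)))
      ≤ 2 * ∑' m : ℕ, (FF l m - FF u m)^2 := by
  have hu : 0 ≤ u := hl.trans hlu
  have hT0 : 0 ≤ ∑' m : ℕ, (FF l m - FF u m)^2 :=
    tsum_nonneg (fun m => sq_nonneg _)
  rcases eq_or_lt_of_le hlu with heq | hlt
  · rw [← heq]
    have hz : ∑' m : ℕ, (FF l m - FF l m)^2 = 0 := by simp
    rw [hz]
    simp
  -- u > l
  obtain ⟨S, hcard, hcov⟩ := window hl hlu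
  set δ : ℝ := u - l with hδ
  have hδpos : 0 < δ := by simp [hδ]; linarith
  set T : ℝ := ∑' m : ℕ, (FF l m - FF u m)^2 with hTdef
  -- sum over S of d lower bound
  have hSd : (21/25) * δ ≤ ∑ m ∈ S, (FF l m - FF u m) := by
    have hrw : ∑ m ∈ S, (FF l m - FF u m) = ∫ t in l..u, (∑ m ∈ S, pp t m) := by
      rw [intervalIntegral.integral_finset_sum
        (fun m _ => (pp_cont m).intervalIntegrable l u)]
      exact Finset.sum_congr rfl (fun m _ => dd_eq_integral m)
    rw [hrw]
    have hconst : ∫ t in l..u, (21/25 : ℝ) = (u - l) * (21/25) := by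
      simp [intervalIntegral.integral_const, smul_eq_mul]
      ring
    calc (21/25) * δ = ∫ t in l..u, (21/25 : ℝ) := by rw [hconst]; ring
      _ ≤ ∫ t in l..u, (∑ m ∈ S, pp t m) := by
          apply intervalIntegral.integral_mono_on hlu
            (intervalIntegrable_const)
            ((continuous_finset_sum S (fun m _ => pp_cont m)).intervalIntegrable l u)
          exact hcov
  have hsub : ∑ m ∈ S, (FF l m - FF u m)^2 ≤ T :=
    Summable.sum_le_tsum S (fun m _ => sq_nonneg _) (summable_dd_sq hl hlu)
  have hCS : (∑ m ∈ S, (FF l m - FF u m))^2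
      ≤ (S.card : ℝ) * ∑ m ∈ S, (FF l m - FF u m)^2 :=
    sq_sum_le_card_mul_sum_sq
  -- card positivity
  have hNpos : (1:ℝ) ≤ (S.card : ℝ) := by
    have : S.Nonempty := by
      by_contra h
      rw [Finset.not_nonempty_iff_eq_empty] at h
      rw [h] at hSd
      simp at hSd
      nlinarith
    have := Finset.card_pos.mpr this
    exact_mod_cast this
  set s : ℝ := Real.sqrt (u + l) with hs
  set w : ℝ := Real.sqrt u + Real.sqrt l with hw
  have hsnn : 0 ≤ s := Real.sqrt_nonneg _
  have hwnn : 0 ≤ w := by positivity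
  have hs2 : s^2 = u + l := Real.sq_sqrt (by linarith)
  have hw2 : w^2 ≤ 2 * s^2 := by
    rw [hs2, hw]
    have h1 : Real.sqrt u * Real.sqrt u = u := Real.mul_self_sqrt hu
    have h2 : Real.sqrt l * Real.sqrt l = l := Real.mul_self_sqrt hl
    nlinarith [sq_nonneg (Real.sqrt u - Real.sqrt l)]
  have hδs : δ ≤ s^2 := by rw [hs2]; simp [hδ]; linarith
  set B : ℝ := δ + (5/2)*w + 1 with hB
  have hBpos : 0 < B := by positivity
  have hNB : (S.card : ℝ) ≤ B := by rw [hB, hw]; simpa [hδ] using hcard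
  -- main bound : (441/625) δ² ≤ B * T
  have hmain : (441/625) * δ^2 ≤ B * T := by
    have h1 : ((21/25) * δ)^2 ≤ (∑ m ∈ S, (FF l m - FF u m))^2 := by
      apply sq_le_sq' _ hSd
      nlinarith [Finset.sum_nonneg (fun m (_ : m ∈ S) => dd_nonneg hl hlu m)]
    have h2 : (∑ m ∈ S, (FF l m - FF u m))^2 ≤ (S.card : ℝ) * T := by
      calc _ ≤ (S.card : ℝ) * ∑ m ∈ S, (FF l m - FF u m)^2 := hCS
        _ ≤ (S.card : ℝ) * T := by
            apply mul_le_mul_of_nonneg_left hsub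
            positivity
    have h3 : (S.card : ℝ) * T ≤ B * T := mul_le_mul_of_nonneg_right hNB hT0
    calc (441/625) * δ^2 = ((21/25) * δ)^2 := by ring
      _ ≤ (∑ m ∈ S, (FF l m - FF u m))^2 := h1
      _ ≤ (S.card : ℝ) * T := h2
      _ ≤ B * T := h3
  -- w ≤ (17/12) s
  have hws : w ≤ (17/12)*s := by
    have h1 : w^2 ≤ ((17/12)*s)^2 := by nlinarith
    calc w = Real.sqrt (w^2) := (Real.sqrt_sq hwnn).symm
      _ ≤ Real.sqrt (((17/12)*s)^2) := Real.sqrt_le_sqrt h1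
      _ = (17/12)*s := Real.sqrt_sq (by positivity)
  -- endgame case analysis
  rcases le_or_gt B (2*δ) with hc1 | hc1
  · -- B ≤ 2δ : use (1/5) δ
    apply le_trans ((min_le_right _ _).trans (min_le_left _ _))
    have h4 : B * T ≤ 2*δ*T := mul_le_mul_of_nonneg_right hc1 hT0
    nlinarith [mul_pos hδpos hδpos]
  · have hδlt : δ < (5/2)*w + 1 := by rw [hB] at hc1; linarith
    rcases le_or_gt 1 s with hs1 | hs1
    · -- s ≥ 1 : use (1/7) δ²/s
      apply le_trans ((min_le_right _ _).trans (min_le_right _ _))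
      rw [div_le_iff₀ (by positivity : (0:ℝ) < s)]
      have hBs : B ≤ (109/12)*s := by
        rw [hB]
        nlinarith
      have h5 : B * T ≤ ((109/12)*s) * T := mul_le_mul_of_nonneg_right hBs hT0
      nlinarith
    · -- s < 1 : use (1/20) δ²
      apply le_trans (min_le_left _ _)
      have hBle : B ≤ 6 := by
        rw [hB]
        nlinarith
      have h5 : B * T ≤ 6 * T := mul_le_mul_of_nonneg_right hBle hT0
      nlinarith

lemma poisson_apply {t : ℝ} (s : Set ℝ) (hs : MeasurableSet s) :
    poissonRealMeasure t s = ∑' k : ℕ, ENNReal.ofReal (pp t k) * s.indicator 1 (k : ℝ) := by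
  rw [poissonRealMeasure, Measure.sum_apply _ hs]
  congr 1
  funext k
  rw [Measure.smul_apply, Measure.dirac_apply' _ hs, smul_eq_mul]
  rfl

lemma poisson_Iic {t : ℝ} (ht : 0 ≤ t) (m : ℕ) :
    poissonRealMeasure t (Set.Iic (m:ℝ)) = ENNReal.ofReal (FF t m) := by
  rw [poisson_apply _ measurableSet_Iic]
  have h1 : ∀ k : ℕ, ENNReal.ofReal (pp t k) * (Set.Iic (m:ℝ)).indicator 1 (k : ℝ)
      = if k ∈ Finset.range (m+1) then ENNReal.ofReal (pp t k) else 0 := by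
    intro k
    by_cases hk : k ≤ m
    · have : (k:ℝ) ∈ Set.Iic (m:ℝ) := by simpa using Nat.cast_le (α := ℝ) |>.mpr hk
      simp [Set.indicator_of_mem this, Finset.mem_range, Nat.lt_succ_iff, hk]
    · have : (k:ℝ) ∉ Set.Iic (m:ℝ) := by
        simp only [Set.mem_Iic, not_le]
        exact_mod_cast Nat.lt_of_not_le hk
      simp [Set.indicator_of_notMem this, Finset.mem_range, Nat.lt_succ_iff, hk]
  rw [tsum_congr h1, tsum_eq_sum (s := Finset.range (m+1)) (by intro b hb; simp [hb])]
  rw [Finset.sum_ite_of_true (fun k hk => hk), FF]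
  rw [← ENNReal.ofReal_sum_of_nonneg (fun k _ => pp_nonneg ht k)]

lemma poisson_range {t : ℝ} (ht : 0 ≤ t) :
    poissonRealMeasure t (Set.range (Nat.cast : ℕ → ℝ)) = 1 := by
  have hms : MeasurableSet (Set.range (Nat.cast : ℕ → ℝ)) :=
    (Set.countable_range _).measurableSet
  rw [poisson_apply _ hms]
  have h1 : ∀ k : ℕ, ENNReal.ofReal (pp t k) * (Set.range (Nat.cast : ℕ → ℝ)).indicator 1 (k : ℝ)
      = ENNReal.ofReal (pp t k) := by
    intro k
    have : (k:ℝ) ∈ Set.range (Nat.cast : ℕ → ℝ) := ⟨k, rfl⟩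
    simp [Set.indicator_of_mem this]
  rw [tsum_congr h1, ← ENNReal.ofReal_tsum_of_nonneg (fun k => pp_nonneg ht k)
    (hasSum_pp ht).summable, (hasSum_pp ht).tsum_eq]
  simp


lemma sum_ite_range (j N : ℕ) (h : j ≤ N) :
    ∑ m ∈ Finset.range N, (if j ≤ m then (1:ℝ) else 0) = (N:ℝ) - (j:ℝ) := by
  have hfil : (Finset.range N).filter (fun m => j ≤ m) = Finset.Ico j N := by
    ext m; simp [Finset.mem_filter, Finset.mem_range, Finset.mem_Ico, and_comm]
  rw [Finset.sum_boole, hfil]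
  simp only [Nat.card_Ico]
  rw [Nat.cast_sub h]

lemma ite_mul_ite (j k m : ℕ) :
    (if j ≤ m then (1:ℝ) else 0) * (if k ≤ m then (1:ℝ) else 0)
      = if max j k ≤ m then (1:ℝ) else 0 := by
  by_cases h1 : j ≤ m <;> by_cases h2 : k ≤ m <;>
    simp [h1, h2, max_le_iff] <;> omega

lemma hasSum_abs_ind (j k : ℕ) :
    HasSum (fun m : ℕ => |(if (j:ℝ) ≤ (m:ℝ) then (1:ℝ) else 0)
      - (if (k:ℝ) ≤ (m:ℝ) then (1:ℝ) else 0)|) |(j:ℝ) - (k:ℝ)| := by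
  have hcast : ∀ a m : ℕ, ((a:ℝ) ≤ (m:ℝ)) = (a ≤ m) := by
    intro a m; simp [Nat.cast_le]
  simp only [hcast]
  set N := max j k with hN
  have hvan : ∀ m : ℕ, m ∉ Finset.range N →
      |(if j ≤ m then (1:ℝ) else 0) - (if k ≤ m then (1:ℝ) else 0)| = 0 := by
    intro m hm
    rw [Finset.mem_range, not_lt] at hm
    have h1 : j ≤ m := le_trans (le_max_left _ _) hm
    have h2 : k ≤ m := le_trans (le_max_right _ _) hm
    simp [h1, h2]
  have hsum := hasSum_sum_of_ne_finset_zero (L := SummationFilter.unconditional ℕ) (s := Finset.range N)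
    (f := fun m : ℕ => |(if j ≤ m then (1:ℝ) else 0) - (if k ≤ m then (1:ℝ) else 0)|) hvan
  have hval : ∑ m ∈ Finset.range N,
      |(if j ≤ m then (1:ℝ) else 0) - (if k ≤ m then (1:ℝ) else 0)| = |(j:ℝ) - (k:ℝ)| := by
    have habs : ∀ m : ℕ, |(if j ≤ m then (1:ℝ) else 0) - (if k ≤ m then (1:ℝ) else 0)|
        = (if j ≤ m then (1:ℝ) else 0) + (if k ≤ m then (1:ℝ) else 0)
          - 2 * (if max j k ≤ m then (1:ℝ) else 0) := by
      intro m
      rw [← ite_mul_ite]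
      by_cases h1 : j ≤ m <;> by_cases h2 : k ≤ m <;> simp [h1, h2] <;> norm_num
    rw [Finset.sum_congr rfl (fun m _ => habs m)]
    rw [Finset.sum_sub_distrib, Finset.sum_add_distrib, ← Finset.mul_sum]
    rw [sum_ite_range j N (le_max_left _ _), sum_ite_range k N (le_max_right _ _),
      sum_ite_range N N le_rfl]
    rcases le_total j k with h | h
    · have : N = k := max_eq_right h
      rw [this]
      rw [abs_of_nonpos (by simp [Nat.cast_le, h] : (j:ℝ) - (k:ℝ) ≤ 0)]
      ring
    · have : N = j := max_eq_left h
      rw [this]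
      rw [abs_of_nonneg (by simp [Nat.cast_le, h] : (0:ℝ) ≤ (j:ℝ) - (k:ℝ))]
      ring
  rwa [hval] at hsum

lemma indicator_bound (a b c d : ℝ)
    (ha : a = 0 ∨ a = 1) (hb : b = 0 ∨ b = 1) (hc : c = 0 ∨ c = 1) (hd : d = 0 ∨ d = 1) :
    |(|a - b| + |c - d| - |a - c| - |b - d|)|
      ≤ 2 * ((1 - a) + (1 - b) + (1 - c) + (1 - d)) := by
  rcases ha with rfl | rfl <;> rcases hb with rfl | rfl <;>
    rcases hc with rfl | rfl <;> rcases hd with rfl | rfl <;> norm_num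

lemma indicator_abs_eq (a b : ℝ) (ha : a = 0 ∨ a = 1) (hb : b = 0 ∨ b = 1) :
    |a - b| = a + b - 2 * (a * b) := by
  rcases ha with rfl | rfl <;> rcases hb with rfl | rfl <;> norm_num


variable {Ω : Type*} [MeasurableSpace Ω] {μ : Measure Ω} [IsProbabilityMeasure μ]

lemma ind_eq_indicator (Z : Ω → ℝ) (m : ℕ) :
    (fun ω => if Z ω ≤ (m:ℝ) then (1:ℝ) else 0)
      = (Z ⁻¹' Set.Iic (m:ℝ)).indicator (fun _ => (1:ℝ)) := by
  funext ω
  by_cases h : Z ω ≤ (m:ℝ)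
  · rw [Set.indicator_of_mem (by simpa using h), if_pos h]
  · rw [Set.indicator_of_notMem (by simpa using h), if_neg h]

lemma integral_ind (Z : Ω → ℝ) (hZ : Measurable Z) (m : ℕ) :
    Integrable (fun ω => if Z ω ≤ (m:ℝ) then (1:ℝ) else 0) μ ∧
    ∫ ω, (if Z ω ≤ (m:ℝ) then (1:ℝ) else 0) ∂μ = (μ (Z ⁻¹' Set.Iic (m:ℝ))).toReal := by
  rw [ind_eq_indicator]
  constructor
  · exact (integrable_const 1).indicator (hZ measurableSet_Iic)
  · rw [integral_indicator_const (1:ℝ) (hZ measurableSet_Iic)]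
    simp [Measure.real]

lemma integral_ind_mul (Z W : Ω → ℝ) (hZ : Measurable Z) (hW : Measurable W)
    (hind : IndepFun Z W μ) (m : ℕ) :
    Integrable (fun ω => (if Z ω ≤ (m:ℝ) then (1:ℝ) else 0)
      * (if W ω ≤ (m:ℝ) then (1:ℝ) else 0)) μ ∧
    ∫ ω, (if Z ω ≤ (m:ℝ) then (1:ℝ) else 0) * (if W ω ≤ (m:ℝ) then (1:ℝ) else 0) ∂μ
      = (μ (Z ⁻¹' Set.Iic (m:ℝ))).toReal * (μ (W ⁻¹' Set.Iic (m:ℝ))).toReal := by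
  have hrw : (fun ω => (if Z ω ≤ (m:ℝ) then (1:ℝ) else 0)
      * (if W ω ≤ (m:ℝ) then (1:ℝ) else 0))
      = ((Z ⁻¹' Set.Iic (m:ℝ)) ∩ (W ⁻¹' Set.Iic (m:ℝ))).indicator (fun _ => (1:ℝ)) := by
    funext ω
    by_cases h1 : Z ω ≤ (m:ℝ) <;> by_cases h2 : W ω ≤ (m:ℝ) <;>
      simp [h1, h2, Set.indicator_apply, Set.mem_inter_iff]
  have hms : MeasurableSet ((Z ⁻¹' Set.Iic (m:ℝ)) ∩ (W ⁻¹' Set.Iic (m:ℝ))) :=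
    (hZ measurableSet_Iic).inter (hW measurableSet_Iic)
  have hmul := hind.measure_inter_preimage_eq_mul (Set.Iic (m:ℝ)) (Set.Iic (m:ℝ))
    measurableSet_Iic measurableSet_Iic
  rw [hrw]
  refine ⟨(integrable_const 1).indicator hms, ?_⟩
  rw [integral_indicator_const (1:ℝ) hms, Measure.real, hmul, ENNReal.toReal_mul]
  simp

lemma integral_abs_ind (Z W : Ω → ℝ) (hZ : Measurable Z) (hW : Measurable W)
    (hind : IndepFun Z W μ) (m : ℕ) :
    Integrable (fun ω => |(if Z ω ≤ (m:ℝ) then (1:ℝ) else 0)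
      - (if W ω ≤ (m:ℝ) then (1:ℝ) else 0)|) μ ∧
    ∫ ω, |(if Z ω ≤ (m:ℝ) then (1:ℝ) else 0) - (if W ω ≤ (m:ℝ) then (1:ℝ) else 0)| ∂μ
      = (μ (Z ⁻¹' Set.Iic (m:ℝ))).toReal + (μ (W ⁻¹' Set.Iic (m:ℝ))).toReal
        - 2 * ((μ (Z ⁻¹' Set.Iic (m:ℝ))).toReal * (μ (W ⁻¹' Set.Iic (m:ℝ))).toReal) := by
  have habs : (fun ω => |(if Z ω ≤ (m:ℝ) then (1:ℝ) else 0)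
      - (if W ω ≤ (m:ℝ) then (1:ℝ) else 0)|)
      = fun ω => (if Z ω ≤ (m:ℝ) then (1:ℝ) else 0) + (if W ω ≤ (m:ℝ) then (1:ℝ) else 0)
        - 2 * ((if Z ω ≤ (m:ℝ) then (1:ℝ) else 0) * (if W ω ≤ (m:ℝ) then (1:ℝ) else 0)) := by
    funext ω
    by_cases h1 : Z ω ≤ (m:ℝ) <;> by_cases h2 : W ω ≤ (m:ℝ) <;> simp [h1, h2] <;> norm_num
  obtain ⟨hiZ, hvZ⟩ := integral_ind (μ := μ) Z hZ m
  obtain ⟨hiW, hvW⟩ := integral_ind (μ := μ) W hW m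
  obtain ⟨hiZW, hvZW⟩ := integral_ind_mul (μ := μ) Z W hZ hW hind m
  rw [habs]
  have hadd : Integrable (fun ω => (if Z ω ≤ (m:ℝ) then (1:ℝ) else 0)
      + (if W ω ≤ (m:ℝ) then (1:ℝ) else 0)) μ := hiZ.add hiW
  have hmul2 : Integrable (fun ω =>
      2 * ((if Z ω ≤ (m:ℝ) then (1:ℝ) else 0) * (if W ω ≤ (m:ℝ) then (1:ℝ) else 0))) μ :=
    hiZW.const_mul 2
  have hint : Integrable (fun ω => (if Z ω ≤ (m:ℝ) then (1:ℝ) else 0)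
      + (if W ω ≤ (m:ℝ) then (1:ℝ) else 0)
      - 2 * ((if Z ω ≤ (m:ℝ) then (1:ℝ) else 0) * (if W ω ≤ (m:ℝ) then (1:ℝ) else 0))) μ :=
    hadd.sub hmul2
  refine ⟨hint, ?_⟩
  rw [integral_sub hadd hmul2, integral_add hiZ hiW, MeasureTheory.integral_const_mul, hvZ, hvW, hvZW]



end PoiGap

/-- Expectation gap in the Poissonized setting: if `p, q ∈ [0,1/4]`, `n ≥ 16`,
`μ := np`, `λ := nq`, and `X, X' ~ Poisson(μ)`, `Y, Y' ~ Poisson(λ)` are mutually independent,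
then `E[|X−Y| + |X'−Y'| − |X−X'| − |Y−Y'|] ≥
  min((1/20)(μ−λ)², (1/5)|μ−λ|, (1/7)(μ−λ)²/√(μ+λ))`. -/
theorem poisson_expectation_gap {Ω : Type*} [MeasurableSpace Ω] (μ : Measure Ω)
    [IsProbabilityMeasure μ]
    (p q : ℝ) (hp : p ∈ Set.Icc (0 : ℝ) (1/4)) (hq : q ∈ Set.Icc (0 : ℝ) (1/4))
    (n : ℕ) (hn : 16 ≤ n)
    (X X' Y Y' : Ω → ℝ)
    (hXm : Measurable X) (hX'm : Measurable X') (hYm : Measurable Y) (hY'm : Measurable Y')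
    (hindep : iIndepFun ![X, X', Y, Y'] μ)
    (hX : Measure.map X μ = poissonRealMeasure (n * p))
    (hX' : Measure.map X' μ = poissonRealMeasure (n * p))
    (hY : Measure.map Y μ = poissonRealMeasure (n * q))
    (hY' : Measure.map Y' μ = poissonRealMeasure (n * q)) :
    ∫ ω, (|X ω - Y ω| + |X' ω - Y' ω| - |X ω - X' ω| - |Y ω - Y' ω|) ∂μ ≥
      min ((1/20) * (n * p - n * q) ^ 2)
        (min ((1/5) * |n * p - n * q|)
          ((1/7) * (n * p - n * q) ^ 2 / Real.sqrt (n * p + n * q))) := by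
  classical
  open PoiGap in
  set a : ℝ := n * p with hadef
  set b : ℝ := n * q with hbdef
  have ha : 0 ≤ a := by
    have := hp.1; positivity
  have hb : 0 ≤ b := by
    have := hq.1; positivity
  -- measure facts
  have hmsrange : MeasurableSet (Set.range (Nat.cast : ℕ → ℝ)) :=
    (Set.countable_range _).measurableSet
  have hprob : ∀ (Z : Ω → ℝ) (t : ℝ), 0 ≤ t → Measurable Z →
      Measure.map Z μ = poissonRealMeasure t →
      (∀ m : ℕ, μ (Z ⁻¹' Set.Iic (m:ℝ)) = ENNReal.ofReal (FF t m)) ∧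
      (∀ᵐ ω ∂μ, Z ω ∈ Set.range (Nat.cast : ℕ → ℝ)) := by
    intro Z t ht hZm hZ
    constructor
    · intro m
      rw [← Measure.map_apply hZm measurableSet_Iic, hZ, poisson_Iic ht]
    · have h1 : μ (Z ⁻¹' Set.range (Nat.cast : ℕ → ℝ)) = 1 := by
        rw [← Measure.map_apply hZm hmsrange, hZ, poisson_range ht]
      rw [ae_iff]
      have h2 : {ω | ¬ Z ω ∈ Set.range (Nat.cast : ℕ → ℝ)}
          = (Z ⁻¹' Set.range (Nat.cast : ℕ → ℝ))ᶜ := rfl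
      rw [h2, measure_compl (hZm hmsrange) (measure_ne_top μ _), h1, measure_univ]
      simp
  obtain ⟨hPX, hRX⟩ := hprob X a ha hXm hX
  obtain ⟨hPX', hRX'⟩ := hprob X' a ha hX'm hX'
  obtain ⟨hPY, hRY⟩ := hprob Y b hb hYm hY
  obtain ⟨hPY', hRY'⟩ := hprob Y' b hb hY'm hY'
  -- independence of pairs
  have hiXY : IndepFun X Y μ := by
    have := hindep.indepFun (show (0 : Fin 4) ≠ 2 by decide)
    simpa using this
  have hiX'Y' : IndepFun X' Y' μ := by
    have := hindep.indepFun (show (1 : Fin 4) ≠ 3 by decide)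
    simpa using this
  have hiXX' : IndepFun X X' μ := by
    have := hindep.indepFun (show (0 : Fin 4) ≠ 1 by decide)
    simpa using this
  have hiYY' : IndepFun Y Y' μ := by
    have := hindep.indepFun (show (2 : Fin 4) ≠ 3 by decide)
    simpa using this
  -- toReal values
  have hAX : ∀ m : ℕ, (μ (X ⁻¹' Set.Iic (m:ℝ))).toReal = FF a m := fun m => by
    rw [hPX m, ENNReal.toReal_ofReal (FF_nonneg ha m)]
  have hAX' : ∀ m : ℕ, (μ (X' ⁻¹' Set.Iic (m:ℝ))).toReal = FF a m := fun m => by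
    rw [hPX' m, ENNReal.toReal_ofReal (FF_nonneg ha m)]
  have hAY : ∀ m : ℕ, (μ (Y ⁻¹' Set.Iic (m:ℝ))).toReal = FF b m := fun m => by
    rw [hPY m, ENNReal.toReal_ofReal (FF_nonneg hb m)]
  have hAY' : ∀ m : ℕ, (μ (Y' ⁻¹' Set.Iic (m:ℝ))).toReal = FF b m := fun m => by
    rw [hPY' m, ENNReal.toReal_ofReal (FF_nonneg hb m)]
  -- the level functions
  set hfun : ℕ → Ω → ℝ := fun m ω =>
    |(if X ω ≤ (m:ℝ) then (1:ℝ) else 0) - (if Y ω ≤ (m:ℝ) then (1:ℝ) else 0)|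
    + |(if X' ω ≤ (m:ℝ) then (1:ℝ) else 0) - (if Y' ω ≤ (m:ℝ) then (1:ℝ) else 0)|
    - |(if X ω ≤ (m:ℝ) then (1:ℝ) else 0) - (if X' ω ≤ (m:ℝ) then (1:ℝ) else 0)|
    - |(if Y ω ≤ (m:ℝ) then (1:ℝ) else 0) - (if Y' ω ≤ (m:ℝ) then (1:ℝ) else 0)| with hfundef
  have hpairXY := fun m => integral_abs_ind (μ := μ) X Y hXm hYm hiXY m
  have hpairX'Y' := fun m => integral_abs_ind (μ := μ) X' Y' hX'm hY'm hiX'Y' m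
  have hpairXX' := fun m => integral_abs_ind (μ := μ) X X' hXm hX'm hiXX' m
  have hpairYY' := fun m => integral_abs_ind (μ := μ) Y Y' hYm hY'm hiYY' m
  -- integrability of hfun m
  have hInt : ∀ m : ℕ, Integrable (hfun m) μ := by
    intro m
    have h12 : Integrable (fun ω =>
        |(if X ω ≤ (m:ℝ) then (1:ℝ) else 0) - (if Y ω ≤ (m:ℝ) then (1:ℝ) else 0)|
        + |(if X' ω ≤ (m:ℝ) then (1:ℝ) else 0) - (if Y' ω ≤ (m:ℝ) then (1:ℝ) else 0)|) μ :=
      (hpairXY m).1.add (hpairX'Y' m).1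
    have h123 : Integrable (fun ω =>
        |(if X ω ≤ (m:ℝ) then (1:ℝ) else 0) - (if Y ω ≤ (m:ℝ) then (1:ℝ) else 0)|
        + |(if X' ω ≤ (m:ℝ) then (1:ℝ) else 0) - (if Y' ω ≤ (m:ℝ) then (1:ℝ) else 0)|
        - |(if X ω ≤ (m:ℝ) then (1:ℝ) else 0) - (if X' ω ≤ (m:ℝ) then (1:ℝ) else 0)|) μ :=
      h12.sub (hpairXX' m).1
    exact h123.sub (hpairYY' m).1
  -- value of the integral of hfun m
  have hVal : ∀ m : ℕ, ∫ ω, hfun m ω ∂μ = 2 * (FF a m - FF b m)^2 := by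
    intro m
    have h12 : Integrable (fun ω =>
        |(if X ω ≤ (m:ℝ) then (1:ℝ) else 0) - (if Y ω ≤ (m:ℝ) then (1:ℝ) else 0)|
        + |(if X' ω ≤ (m:ℝ) then (1:ℝ) else 0) - (if Y' ω ≤ (m:ℝ) then (1:ℝ) else 0)|) μ :=
      (hpairXY m).1.add (hpairX'Y' m).1
    have h123 : Integrable (fun ω =>
        |(if X ω ≤ (m:ℝ) then (1:ℝ) else 0) - (if Y ω ≤ (m:ℝ) then (1:ℝ) else 0)|
        + |(if X' ω ≤ (m:ℝ) then (1:ℝ) else 0) - (if Y' ω ≤ (m:ℝ) then (1:ℝ) else 0)|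
        - |(if X ω ≤ (m:ℝ) then (1:ℝ) else 0) - (if X' ω ≤ (m:ℝ) then (1:ℝ) else 0)|) μ :=
      h12.sub (hpairXX' m).1
    have e1 := (hpairXY m).2
    have e2 := (hpairX'Y' m).2
    have e3 := (hpairXX' m).2
    have e4 := (hpairYY' m).2
    rw [hAX m, hAY m] at e1
    rw [hAX' m, hAY' m] at e2
    rw [hAX m, hAX' m] at e3
    rw [hAY m, hAY' m] at e4
    calc ∫ ω, hfun m ω ∂μ
        = (∫ ω, (|(if X ω ≤ (m:ℝ) then (1:ℝ) else 0) - (if Y ω ≤ (m:ℝ) then (1:ℝ) else 0)|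
          + |(if X' ω ≤ (m:ℝ) then (1:ℝ) else 0) - (if Y' ω ≤ (m:ℝ) then (1:ℝ) else 0)|
          - |(if X ω ≤ (m:ℝ) then (1:ℝ) else 0) - (if X' ω ≤ (m:ℝ) then (1:ℝ) else 0)|) ∂μ)
          - ∫ ω, |(if Y ω ≤ (m:ℝ) then (1:ℝ) else 0) - (if Y' ω ≤ (m:ℝ) then (1:ℝ) else 0)| ∂μ := by
          rw [← integral_sub h123 (hpairYY' m).1]
      _ = ((∫ ω, (|(if X ω ≤ (m:ℝ) then (1:ℝ) else 0) - (if Y ω ≤ (m:ℝ) then (1:ℝ) else 0)|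
          + |(if X' ω ≤ (m:ℝ) then (1:ℝ) else 0) - (if Y' ω ≤ (m:ℝ) then (1:ℝ) else 0)|) ∂μ)
          - ∫ ω, |(if X ω ≤ (m:ℝ) then (1:ℝ) else 0) - (if X' ω ≤ (m:ℝ) then (1:ℝ) else 0)| ∂μ)
          - ∫ ω, |(if Y ω ≤ (m:ℝ) then (1:ℝ) else 0) - (if Y' ω ≤ (m:ℝ) then (1:ℝ) else 0)| ∂μ := by
          rw [← integral_sub h12 (hpairXX' m).1]
      _ = (((∫ ω, |(if X ω ≤ (m:ℝ) then (1:ℝ) else 0) - (if Y ω ≤ (m:ℝ) then (1:ℝ) else 0)| ∂μ)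
          + ∫ ω, |(if X' ω ≤ (m:ℝ) then (1:ℝ) else 0) - (if Y' ω ≤ (m:ℝ) then (1:ℝ) else 0)| ∂μ)
          - ∫ ω, |(if X ω ≤ (m:ℝ) then (1:ℝ) else 0) - (if X' ω ≤ (m:ℝ) then (1:ℝ) else 0)| ∂μ)
          - ∫ ω, |(if Y ω ≤ (m:ℝ) then (1:ℝ) else 0) - (if Y' ω ≤ (m:ℝ) then (1:ℝ) else 0)| ∂μ := by
          rw [← integral_add (hpairXY m).1 (hpairX'Y' m).1]
      _ = 2 * (FF a m - FF b m)^2 := by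
          rw [e1, e2, e3, e4]; ring
  -- integrability of single indicators
  have hiX := fun m => (integral_ind (μ := μ) X hXm m).1
  have hiY := fun m => (integral_ind (μ := μ) Y hYm m).1
  have hiX' := fun m => (integral_ind (μ := μ) X' hX'm m).1
  have hiY' := fun m => (integral_ind (μ := μ) Y' hY'm m).1
  have hvX := fun m => (integral_ind (μ := μ) X hXm m).2
  have hvY := fun m => (integral_ind (μ := μ) Y hYm m).2
  have hvX' := fun m => (integral_ind (μ := μ) X' hX'm m).2
  have hvY' := fun m => (integral_ind (μ := μ) Y' hY'm m).2
  -- norm bound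
  have hNorm : ∀ m : ℕ, ∫ ω, ‖hfun m ω‖ ∂μ ≤ 4 * ((1 - FF a m) + (1 - FF b m)) := by
    intro m
    have hb1 : Integrable (fun ω => (1:ℝ) - (if X ω ≤ (m:ℝ) then (1:ℝ) else 0)) μ :=
      (integrable_const 1).sub (hiX m)
    have hb2 : Integrable (fun ω => (1:ℝ) - (if Y ω ≤ (m:ℝ) then (1:ℝ) else 0)) μ :=
      (integrable_const 1).sub (hiY m)
    have hb3 : Integrable (fun ω => (1:ℝ) - (if X' ω ≤ (m:ℝ) then (1:ℝ) else 0)) μ :=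
      (integrable_const 1).sub (hiX' m)
    have hb4 : Integrable (fun ω => (1:ℝ) - (if Y' ω ≤ (m:ℝ) then (1:ℝ) else 0)) μ :=
      (integrable_const 1).sub (hiY' m)
    have hb12 : Integrable (fun ω => ((1:ℝ) - (if X ω ≤ (m:ℝ) then (1:ℝ) else 0))
        + ((1:ℝ) - (if Y ω ≤ (m:ℝ) then (1:ℝ) else 0))) μ := hb1.add hb2
    have hb123 : Integrable (fun ω => ((1:ℝ) - (if X ω ≤ (m:ℝ) then (1:ℝ) else 0))
        + ((1:ℝ) - (if Y ω ≤ (m:ℝ) then (1:ℝ) else 0))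
        + ((1:ℝ) - (if X' ω ≤ (m:ℝ) then (1:ℝ) else 0))) μ := hb12.add hb3
    have hb1234 : Integrable (fun ω => ((1:ℝ) - (if X ω ≤ (m:ℝ) then (1:ℝ) else 0))
        + ((1:ℝ) - (if Y ω ≤ (m:ℝ) then (1:ℝ) else 0))
        + ((1:ℝ) - (if X' ω ≤ (m:ℝ) then (1:ℝ) else 0))
        + ((1:ℝ) - (if Y' ω ≤ (m:ℝ) then (1:ℝ) else 0))) μ := hb123.add hb4
    have hbint : Integrable (fun ω => 2 * (((1:ℝ) - (if X ω ≤ (m:ℝ) then (1:ℝ) else 0))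
        + ((1:ℝ) - (if Y ω ≤ (m:ℝ) then (1:ℝ) else 0))
        + ((1:ℝ) - (if X' ω ≤ (m:ℝ) then (1:ℝ) else 0))
        + ((1:ℝ) - (if Y' ω ≤ (m:ℝ) then (1:ℝ) else 0)))) μ := hb1234.const_mul 2
    have hmono : ∀ ω, ‖hfun m ω‖ ≤ 2 * (((1:ℝ) - (if X ω ≤ (m:ℝ) then (1:ℝ) else 0))
        + ((1:ℝ) - (if Y ω ≤ (m:ℝ) then (1:ℝ) else 0))
        + ((1:ℝ) - (if X' ω ≤ (m:ℝ) then (1:ℝ) else 0))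
        + ((1:ℝ) - (if Y' ω ≤ (m:ℝ) then (1:ℝ) else 0))) := by
      intro ω
      have hind : ∀ (c : Prop) [Decidable c], (if c then (1:ℝ) else 0) = 0
          ∨ (if c then (1:ℝ) else 0) = 1 := by
        intro c _
        by_cases h : c
        · exact Or.inr (if_pos h)
        · exact Or.inl (if_neg h)
      have := indicator_bound (if X ω ≤ (m:ℝ) then (1:ℝ) else 0)
        (if Y ω ≤ (m:ℝ) then (1:ℝ) else 0)
        (if X' ω ≤ (m:ℝ) then (1:ℝ) else 0)
        (if Y' ω ≤ (m:ℝ) then (1:ℝ) else 0)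
        (hind _) (hind _) (hind _) (hind _)
      rw [hfundef]
      simp only [Real.norm_eq_abs]
      exact le_trans this (le_of_eq (by ring))
    have h1 : ∫ ω, ‖hfun m ω‖ ∂μ ≤ ∫ ω, 2 * (((1:ℝ) - (if X ω ≤ (m:ℝ) then (1:ℝ) else 0))
        + ((1:ℝ) - (if Y ω ≤ (m:ℝ) then (1:ℝ) else 0))
        + ((1:ℝ) - (if X' ω ≤ (m:ℝ) then (1:ℝ) else 0))
        + ((1:ℝ) - (if Y' ω ≤ (m:ℝ) then (1:ℝ) else 0))) ∂μ :=
      integral_mono (hInt m).norm hbint hmono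
    have hint1 : ∫ ω, ((1:ℝ) - (if X ω ≤ (m:ℝ) then (1:ℝ) else 0)) ∂μ = 1 - FF a m := by
      rw [integral_sub (integrable_const 1) (hiX m), hvX m, hAX m, integral_const]
      simp
    have hint2 : ∫ ω, ((1:ℝ) - (if Y ω ≤ (m:ℝ) then (1:ℝ) else 0)) ∂μ = 1 - FF b m := by
      rw [integral_sub (integrable_const 1) (hiY m), hvY m, hAY m, integral_const]
      simp
    have hint3 : ∫ ω, ((1:ℝ) - (if X' ω ≤ (m:ℝ) then (1:ℝ) else 0)) ∂μ = 1 - FF a m := by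
      rw [integral_sub (integrable_const 1) (hiX' m), hvX' m, hAX' m, integral_const]
      simp
    have hint4 : ∫ ω, ((1:ℝ) - (if Y' ω ≤ (m:ℝ) then (1:ℝ) else 0)) ∂μ = 1 - FF b m := by
      rw [integral_sub (integrable_const 1) (hiY' m), hvY' m, hAY' m, integral_const]
      simp
    have h2 : ∫ ω, 2 * (((1:ℝ) - (if X ω ≤ (m:ℝ) then (1:ℝ) else 0))
        + ((1:ℝ) - (if Y ω ≤ (m:ℝ) then (1:ℝ) else 0))
        + ((1:ℝ) - (if X' ω ≤ (m:ℝ) then (1:ℝ) else 0))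
        + ((1:ℝ) - (if Y' ω ≤ (m:ℝ) then (1:ℝ) else 0))) ∂μ
        = 4 * ((1 - FF a m) + (1 - FF b m)) := by
      rw [MeasureTheory.integral_const_mul, integral_add hb123 hb4, integral_add hb12 hb3,
        integral_add hb1 hb2, hint1, hint2, hint3, hint4]
      ring
    linarith
  -- summability of the integral norms
  have hSummable : Summable (fun m : ℕ => ∫ ω, ‖hfun m ω‖ ∂μ) := by
    have base : Summable (fun m : ℕ => (4 * ((a^2+a) + (b^2+b))) * (1/((m:ℝ)+1)^2)) :=
      summable_inv_sq.mul_left _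
    apply Summable.of_nonneg_of_le
      (fun m => integral_nonneg (fun ω => norm_nonneg _)) _ base
    intro m
    have h1 := FF_tail ha m
    have h2 := FF_tail hb m
    have h3 := hNorm m
    have h4 : (0:ℝ) < ((m:ℝ)+1)^2 := by positivity
    calc ∫ ω, ‖hfun m ω‖ ∂μ ≤ 4 * ((1 - FF a m) + (1 - FF b m)) := h3
      _ ≤ 4 * ((a^2+a)/((m:ℝ)+1)^2 + (b^2+b)/((m:ℝ)+1)^2) := by linarith
      _ = (4 * ((a^2+a) + (b^2+b))) * (1/((m:ℝ)+1)^2) := by field_simp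
  -- pointwise identity a.e.
  have haeEq : (fun ω => |X ω - Y ω| + |X' ω - Y' ω| - |X ω - X' ω| - |Y ω - Y' ω|)
      =ᵐ[μ] (fun ω => ∑' m : ℕ, hfun m ω) := by
    filter_upwards [hRX, hRX', hRY, hRY'] with ω h1 h2 h3 h4
    obtain ⟨j1, e1⟩ := h1
    obtain ⟨j2, e2⟩ := h2
    obtain ⟨j3, e3⟩ := h3
    obtain ⟨j4, e4⟩ := h4
    simp only [hfundef]
    rw [← e1, ← e2, ← e3, ← e4]
    have hs := (((hasSum_abs_ind j1 j3).add (hasSum_abs_ind j2 j4)).sub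
      (hasSum_abs_ind j1 j2)).sub (hasSum_abs_ind j3 j4)
    exact hs.tsum_eq.symm
  -- key identity
  have hkey : ∫ ω, (|X ω - Y ω| + |X' ω - Y' ω| - |X ω - X' ω| - |Y ω - Y' ω|) ∂μ
      = 2 * ∑' m : ℕ, (FF a m - FF b m)^2 := by
    rw [integral_congr_ae haeEq,
      ← integral_tsum_of_summable_integral_norm hInt hSummable,
      tsum_congr hVal, tsum_mul_left]
  rw [ge_iff_le, hkey]
  rcases le_total a b with hab | hab
  · have hmeq : min ((1/20) * (a-b)^2) (min ((1/5) * |a-b|) ((1/7) * (a-b)^2 / Real.sqrt (a+b)))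
        = min ((1/20) * (b-a)^2) (min ((1/5) * (b-a)) ((1/7) * (b-a)^2 / Real.sqrt (b+a))) := by
      rw [abs_of_nonpos (by linarith : a - b ≤ 0), show -(a-b) = b - a by ring,
        show (a-b)^2 = (b-a)^2 by ring, show a + b = b + a by ring]
    rw [hmeq]
    exact core (l := a) (u := b) ha hab
  · rw [abs_of_nonneg (by linarith : (0:ℝ) ≤ a - b)]
    have hcore := core (l := b) (u := a) hb hab
    have hflip : ∑' m : ℕ, (FF a m - FF b m)^2 = ∑' m : ℕ, (FF b m - FF a m)^2 :=
      tsum_congr (fun m => by ring)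
    rw [hflip]
    exact hcore
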